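/- (Proposition 3.) Let X ⊂ ℝ^{n_x} be a nonempty compact set, let x : [0,∞) → ℝ^{n_x} be differentiable with x'(t) = f(x(t)) and x(t) ∈ X for all t ≥ 0, let v : [0,∞) → ℝ^{n_y} satisfy ‖v(t)‖ ≤ v̄ for all t ≥ 0, and let ẑ : [0,∞) → ℝ^{n_z} be differentiable with ẑ'(t) = A ẑ(t) + B(h(x(t)) + v(t)) for all t ≥ 0. Let T̂ : ℝ^{n_x} → ℝ^{n_z} be continuously differentiable with PDE residual R and set R̄ := sup_{x∈X} ‖R(x)‖. Let Z ⊂ ℝ^{n_z} be a set containing T̂(X) and containing ẑ(t) for all t ≥ 0, let T̂* : ℝ^{n_z} → ℝ^{n_x} be Lipschitz with constant L ≥ 0 on Z, and define x̂(t) := T̂*(ẑ(t)) and E := sup_{x∈X} ‖T̂*(T̂(x)) − x‖, assumed finite. Let P, Q ∈ ℝ^{n_z×n_z} be symmetric positive definite with P A + Aᵀ P = −Q. Then limsup_{t→∞} ‖x̂(t) − x(t)‖ ≤ L·√(4·λ_max(P)/(λ_min(Q)·λ_min(P)))·( ‖Q^{−1/2}P‖·R̄ + ‖Q^{−1/2}P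 B‖·v̄ ) + E. -/

import Mathlib

open Filter Matrix

/-- Euclidean space `ℝ^n`. -/
abbrev E (n : ℕ) := EuclideanSpace ℝ (Fin n)

/-- Smallest eigenvalue of a (Hermitian) real matrix. -/
noncomputable def lamMin {n : ℕ} (M : Matrix (Fin n) (Fin n) ℝ) : ℝ :=
  if h : M.IsHermitian then ⨅ i, h.eigenvalues i else 0

/-- Largest eigenvalue of a (Hermitian) real matrix. -/
noncomputable def lamMax {n : ℕ} (M : Matrix (Fin n) (Fin n) ℝ) : ℝ :=
  if h : M.IsHermitian then ⨆ i, h.eigenvalues i else 0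

open scoped Classical in
/-- The positive semidefinite square root `M^{1/2}` of a positive semidefinite matrix. -/
noncomputable def matSqrt {n : ℕ} (M : Matrix (Fin n) (Fin n) ℝ) : Matrix (Fin n) (Fin n) ℝ :=
  if h : M.PosSemidef then
    h.1.eigenvectorUnitary.1 * diagonal (fun i => Real.sqrt (h.1.eigenvalues i)) *
      (star h.1.eigenvectorUnitary : Matrix (Fin n) (Fin n) ℝ)
  else 0

/-- `M^{-1/2} := (M^{1/2})⁻¹`. -/
noncomputable def invSqrt {n : ℕ} (M : Matrix (Fin n) (Fin n) ℝ) : Matrix (Fin n) (Fin n) ℝ :=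
  (matSqrt M)⁻¹

/-- Operator norm of a matrix induced by the Euclidean norms. -/
noncomputable def opNorm {m n : ℕ} (M : Matrix (Fin m) (Fin n) ℝ) : ℝ :=
  ‖LinearMap.toContinuousLinearMap (Matrix.toEuclideanLin M)‖

/-- Matrix-vector multiplication as a map between Euclidean spaces. -/
def mv {m n : ℕ} (M : Matrix (Fin m) (Fin n) ℝ) (v : E n) : E m := WithLp.toLp 2 (M.mulVec v)

/- ### Auxiliary lemmas -/

noncomputable def mvL {m n : ℕ} (M : Matrix (Fin m) (Fin n) ℝ) : E n →L[ℝ] E m :=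
  LinearMap.toContinuousLinearMap (Matrix.toEuclideanLin M)

lemma mvL_apply {m n : ℕ} (M : Matrix (Fin m) (Fin n) ℝ) (u : E n) : mvL M u = mv M u := rfl

lemma opNorm_nonneg {m n : ℕ} (M : Matrix (Fin m) (Fin n) ℝ) : 0 ≤ opNorm M := norm_nonneg _

lemma norm_mv_le {m n : ℕ} (M : Matrix (Fin m) (Fin n) ℝ) (u : E n) :
    ‖mv M u‖ ≤ opNorm M * ‖u‖ := by
  rw [← mvL_apply]; exact (mvL M).le_opNorm u

lemma mv_add {m n : ℕ} (M : Matrix (Fin m) (Fin n) ℝ) (u w : E n) :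
    mv M (u + w) = mv M u + mv M w := by
  rw [← mvL_apply, ← mvL_apply, ← mvL_apply, map_add]

lemma mv_sub {m n : ℕ} (M : Matrix (Fin m) (Fin n) ℝ) (u w : E n) :
    mv M (u - w) = mv M u - mv M w := by
  rw [← mvL_apply, ← mvL_apply, ← mvL_apply, map_sub]

lemma mv_mv {m n k : ℕ} (M : Matrix (Fin m) (Fin n) ℝ) (N : Matrix (Fin n) (Fin k) ℝ) (u : E k) :
    mv (M * N) u = mv M (mv N u) := by
  simp only [mv, WithLp.ofLp_toLp, Matrix.mulVec_mulVec]

lemma mv_addM {m n : ℕ} (M N : Matrix (Fin m) (Fin n) ℝ) (u : E n) :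
    mv (M + N) u = mv M u + mv N u := by
  show WithLp.toLp 2 ((M + N).mulVec u) = WithLp.toLp 2 (M.mulVec u) + WithLp.toLp 2 (N.mulVec u)
  rw [Matrix.add_mulVec, WithLp.toLp_add]

lemma mv_negM {m n : ℕ} (M : Matrix (Fin m) (Fin n) ℝ) (u : E n) :
    mv (-M) u = -(mv M u) := by
  show WithLp.toLp 2 ((-M).mulVec u) = -WithLp.toLp 2 (M.mulVec u)
  rw [Matrix.neg_mulVec, WithLp.toLp_neg]

lemma inner_mv {m n : ℕ} (M : Matrix (Fin m) (Fin n) ℝ) (u : E n) (w : E m) :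
    inner ℝ (mv M u) w = (inner ℝ u (mv Mᵀ w) : ℝ) := by
  rw [EuclideanSpace.inner_eq_star_dotProduct, EuclideanSpace.inner_eq_star_dotProduct]
  simp only [mv, WithLp.ofLp_toLp, star_trivial]
  rw [Matrix.dotProduct_mulVec, ← Matrix.vecMul_transpose, Matrix.transpose_transpose]

lemma transpose_eq_of_herm {n : ℕ} {M : Matrix (Fin n) (Fin n) ℝ} (hM : M.IsHermitian) :
    Mᵀ = M := by
  rw [← Matrix.conjTranspose_eq_transpose_of_trivial]; exact hM

lemma inner_mv_eq_sum {n : ℕ} (M : Matrix (Fin n) (Fin n) ℝ) (hM : M.IsHermitian) (u : E n) :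
    (inner ℝ (mv M u) u : ℝ) =
      ∑ i, hM.eigenvalues i * (inner ℝ u (hM.eigenvectorBasis i) : ℝ)^2 := by
  rw [← (hM.eigenvectorBasis).sum_inner_mul_inner (mv M u) u]
  refine Finset.sum_congr rfl fun i _ => ?_
  have h1 : (inner ℝ (mv M u) (hM.eigenvectorBasis i) : ℝ)
      = inner ℝ u (mv M (hM.eigenvectorBasis i)) := by
    rw [inner_mv, transpose_eq_of_herm hM]
  have h2 : mv M (hM.eigenvectorBasis i) = hM.eigenvalues i • hM.eigenvectorBasis i := by
    show WithLp.toLp 2 (M.mulVec (hM.eigenvectorBasis i)) = _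
    rw [hM.mulVec_eigenvectorBasis i]; rfl
  rw [h1, h2, real_inner_smul_right, real_inner_comm (hM.eigenvectorBasis i) u]
  ring

lemma norm_sq_eq_sum {n : ℕ} (M : Matrix (Fin n) (Fin n) ℝ) (hM : M.IsHermitian) (u : E n) :
    ‖u‖^2 = ∑ i, (inner ℝ u (hM.eigenvectorBasis i) : ℝ)^2 := by
  rw [← real_inner_self_eq_norm_sq, ← (hM.eigenvectorBasis).sum_inner_mul_inner u u]
  refine Finset.sum_congr rfl fun i _ => ?_
  rw [real_inner_comm (hM.eigenvectorBasis i) u]; ring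

lemma rayleigh_le {n : ℕ} (M : Matrix (Fin n) (Fin n) ℝ) (hM : M.IsHermitian) (u : E n) :
    (inner ℝ (mv M u) u : ℝ) ≤ lamMax M * ‖u‖^2 := by
  rw [inner_mv_eq_sum M hM, norm_sq_eq_sum M hM, lamMax, dif_pos hM, Finset.mul_sum]
  refine Finset.sum_le_sum fun i _ => ?_
  exact mul_le_mul_of_nonneg_right (le_ciSup (Set.Finite.bddAbove (Set.finite_range _)) i)
    (sq_nonneg _)

lemma rayleigh_ge {n : ℕ} (M : Matrix (Fin n) (Fin n) ℝ) (hM : M.IsHermitian) (u : E n) :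
    lamMin M * ‖u‖^2 ≤ inner ℝ (mv M u) u := by
  rw [inner_mv_eq_sum M hM, norm_sq_eq_sum M hM, lamMin, dif_pos hM, Finset.mul_sum]
  refine Finset.sum_le_sum fun i _ => ?_
  exact mul_le_mul_of_nonneg_right (ciInf_le (Set.Finite.bddBelow (Set.finite_range _)) i)
    (sq_nonneg _)

lemma lamMin_pos {n : ℕ} (hn : 0 < n) {M : Matrix (Fin n) (Fin n) ℝ} (hM : M.PosDef) :
    0 < lamMin M := by
  haveI : NeZero n := ⟨hn.ne'⟩
  rw [lamMin, dif_pos hM.1]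
  obtain ⟨i, hi⟩ := Finite.exists_min hM.1.eigenvalues
  exact lt_of_lt_of_le (hM.eigenvalues_pos i) (le_ciInf hi)

lemma lamMax_pos {n : ℕ} (hn : 0 < n) {M : Matrix (Fin n) (Fin n) ℝ} (hM : M.PosDef) :
    0 < lamMax M := by
  haveI : NeZero n := ⟨hn.ne'⟩
  rw [lamMax, dif_pos hM.1]
  exact lt_of_lt_of_le (hM.eigenvalues_pos (Classical.arbitrary _))
    (le_ciSup (Set.Finite.bddAbove (Set.finite_range _)) _)

lemma matSqrt_herm {n : ℕ} {Q : Matrix (Fin n) (Fin n) ℝ} (hQ : Q.PosDef) :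
    (matSqrt Q).IsHermitian := by
  rw [matSqrt, dif_pos hQ.posSemidef]
  simp [IsHermitian, Matrix.conjTranspose_mul, Matrix.mul_assoc, diagonal_conjTranspose,
    Matrix.star_eq_conjTranspose, Matrix.conjTranspose_eq_transpose_of_trivial]

lemma matSqrt_mul_self {n : ℕ} {Q : Matrix (Fin n) (Fin n) ℝ} (hQ : Q.PosDef) :
    matSqrt Q * matSqrt Q = Q := by
  rw [matSqrt, dif_pos hQ.posSemidef]
  have hs := hQ.posSemidef.1.spectral_theorem
  rw [Unitary.conjStarAlgAut_apply] at hs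
  conv_rhs => rw [hs]
  have hU := Unitary.coe_star_mul_self hQ.posSemidef.1.eigenvectorUnitary
  simp only [Matrix.mul_assoc]
  rw [← Matrix.mul_assoc (star _ : Matrix (Fin n) (Fin n) ℝ) _, hU, Matrix.one_mul,
    ← Matrix.mul_assoc (diagonal _), diagonal_mul_diagonal]
  congr 3
  funext i
  simp [Real.mul_self_sqrt (hQ.posSemidef.eigenvalues_nonneg i)]

lemma matSqrt_det_isUnit {n : ℕ} {Q : Matrix (Fin n) (Fin n) ℝ} (hQ : Q.PosDef) :
    IsUnit (matSqrt Q).det := by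
  have h : (matSqrt Q).det * (matSqrt Q).det = Q.det := by
    rw [← Matrix.det_mul, matSqrt_mul_self hQ]
  have hd := hQ.det_pos
  refine isUnit_iff_ne_zero.2 fun h0 => ?_
  rw [h0, mul_zero] at h
  exact hd.ne h

lemma matSqrt_mul_invSqrt {n : ℕ} {Q : Matrix (Fin n) (Fin n) ℝ} (hQ : Q.PosDef) :
    matSqrt Q * invSqrt Q = 1 :=
  Matrix.mul_nonsing_inv _ (matSqrt_det_isUnit hQ)

lemma eventually_le_of_deriv {V V' : ℝ → ℝ} (hV : ∀ t ≥ (0:ℝ), HasDerivAt V (V' t) t)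
    (K δ : ℝ) (hδ : 0 < δ) (hd : ∀ t ≥ (0:ℝ), K ≤ V t → V' t ≤ -δ) :
    ∀ᶠ t in atTop, V t ≤ K := by
  have hg : ∀ s ≥ (0:ℝ), HasDerivAt (fun τ => V τ + δ * τ) (V' s + δ) s := by
    intro s hs
    have := (hV s hs).add ((hasDerivAt_id' s).const_mul δ); rw [mul_one] at this; exact this
  have decay : ∀ a b : ℝ, 0 ≤ a → a ≤ b → (∀ s ∈ Set.Ioo a b, K ≤ V s) →
      V b + δ * b ≤ V a + δ * a := by
    intro a b ha hab hio
    have hmem : ∀ s ∈ Set.Icc a b, (0:ℝ) ≤ s := fun s hs => le_trans ha hs.1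
    have := antitoneOn_of_deriv_nonpos (convex_Icc a b)
      (f := fun τ => V τ + δ * τ)
      (fun s hs => ((hg s (hmem s hs)).continuousAt.continuousWithinAt))
      (fun s hs => by
        rw [interior_Icc] at hs
        exact ((hg s (le_trans ha hs.1.le)).differentiableAt).differentiableWithinAt)
      (fun s hs => by
        rw [interior_Icc] at hs
        rw [(hg s (le_trans ha hs.1.le)).deriv]
        have := hd s (le_trans ha hs.1.le) (hio s hs)
        linarith)
    exact this (Set.left_mem_Icc.2 hab) (Set.right_mem_Icc.2 hab) hab
  have h1 : ∃ t₀ ≥ (0:ℝ), V t₀ ≤ K := by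
    by_contra hc
    push_neg at hc
    have h0 : K < V 0 := hc 0 le_rfl
    have hX : 0 < (V 0 - K) / δ := div_pos (by linarith) hδ
    have hd2 := decay 0 ((V 0 - K)/δ + 1) le_rfl (by linarith) (fun s hs => (hc s hs.1.le).le)
    have hmul : δ * ((V 0 - K)/δ + 1) = (V 0 - K) + δ := by field_simp
    have hlt : V ((V 0 - K)/δ + 1) < K := by linarith
    exact absurd (hc _ (by linarith)) (not_lt.2 hlt.le)
  obtain ⟨t₀, ht₀, hVt₀⟩ := h1
  filter_upwards [eventually_ge_atTop t₀] with t ht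
  by_contra hKt
  push_neg at hKt
  set S : Set ℝ := {τ ∈ Set.Icc t₀ t | V τ ≤ K} with hS
  have hne : S.Nonempty := ⟨t₀, ⟨le_refl t₀, ht⟩, hVt₀⟩
  have hbdd : BddAbove S := ⟨t, fun τ hτ => hτ.1.2⟩
  have hclosed : IsClosed S := by
    have hcont : ContinuousOn V (Set.Icc t₀ t) := fun s hs =>
      (hV s (le_trans ht₀ hs.1)).continuousAt.continuousWithinAt
    exact hcont.preimage_isClosed_of_isClosed isClosed_Icc isClosed_Iic
  set s := sSup S with hs
  have hsmem : s ∈ S := hclosed.csSup_mem hne hbdd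
  have hst : s < t := lt_of_le_of_ne hsmem.1.2 (fun h => by
    rw [h] at hsmem; exact absurd hsmem.2 (not_le.2 hKt))
  have hio : ∀ τ ∈ Set.Ioo s t, K ≤ V τ := by
    intro τ hτ
    by_contra hn
    push_neg at hn
    have : τ ∈ S := ⟨⟨le_trans hsmem.1.1 hτ.1.le, hτ.2.le⟩, hn.le⟩
    exact absurd (le_csSup hbdd this) (not_le.2 hτ.1)
  have := decay s t (le_trans ht₀ hsmem.1.1) hst.le hio
  have hVs : V s ≤ K := hsmem.2
  nlinarith [hst.le, hδ]
set_option maxHeartbeats 1000000 in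
theorem stmt12 {nx ny nz : ℕ}
    (f : E nx → E nx) (hf : Continuous f)
    (h : E nx → E ny) (hh : Continuous h)
    (A : Matrix (Fin nz) (Fin nz) ℝ) (B : Matrix (Fin nz) (Fin ny) ℝ)
    (X : Set (E nx)) (hXne : X.Nonempty) (hXc : IsCompact X)
    (x : ℝ → E nx) (hx : ∀ t ≥ (0:ℝ), HasDerivAt x (f (x t)) t)
    (hxX : ∀ t ≥ (0:ℝ), x t ∈ X)
    (vbar : ℝ) (hvbar : 0 ≤ vbar)
    (v : ℝ → E ny) (hv : ∀ t ≥ (0:ℝ), ‖v t‖ ≤ vbar)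
    (zh : ℝ → E nz)
    (hz : ∀ t ≥ (0:ℝ), HasDerivAt zh (mv A (zh t) + mv B (h (x t) + v t)) t)
    (T : E nx → E nz) (hT : ContDiff ℝ 1 T)
    (R : E nx → E nz)
    (hR : ∀ p, R p = fderiv ℝ T p (f p) - mv A (T p) - mv B (h p))
    (Rbar : ℝ) (hRbar : Rbar = sSup ((fun p => ‖R p‖) '' X))
    (Z : Set (E nz)) (hTZ : T '' X ⊆ Z) (hzZ : ∀ t ≥ (0:ℝ), zh t ∈ Z)
    (Ts : E nz → E nx) (L : ℝ) (hL : 0 ≤ L)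
    (hLip : ∀ z₁ ∈ Z, ∀ z₂ ∈ Z, ‖Ts z₁ - Ts z₂‖ ≤ L * ‖z₁ - z₂‖)
    (Err : ℝ) (hErr : Err = sSup ((fun p => ‖Ts (T p) - p‖) '' X))
    (hbdd : BddAbove ((fun p => ‖Ts (T p) - p‖) '' X))
    (P Q : Matrix (Fin nz) (Fin nz) ℝ) (hP : P.PosDef) (hQ : Q.PosDef)
    (hLyap : P * A + Aᵀ * P = -Q) :
    limsup (fun t => ‖Ts (zh t) - x t‖) atTop ≤
      L * Real.sqrt (4 * lamMax P / (lamMin Q * lamMin P)) *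
          (opNorm (invSqrt Q * P) * Rbar + opNorm (invSqrt Q * P * B) * vbar)
        + Err := by
  -- continuity of the residual and basic bounds
  have hRcont : Continuous R := by
    have h1 : Continuous fun p => fderiv ℝ T p (f p) :=
      (hT.continuous_fderiv one_ne_zero).clm_apply hf
    have h2 : Continuous fun p => mv A (T p) := (mvL A).continuous.comp hT.continuous
    have h3 : Continuous fun p => mv B (h p) := (mvL B).continuous.comp hh
    have hRe : R = fun p => fderiv ℝ T p (f p) - mv A (T p) - mv B (h p) := funext hR
    rw [hRe]
    exact (h1.sub h2).sub h3
  have hRbdd : BddAbove ((fun p => ‖R p‖) '' X) := (hXc.image hRcont.norm).bddAbove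
  have hRle : ∀ p ∈ X, ‖R p‖ ≤ Rbar := fun p hp =>
    hRbar ▸ le_csSup hRbdd (Set.mem_image_of_mem _ hp)
  obtain ⟨p₀, hp₀⟩ := hXne
  have hRbar0 : 0 ≤ Rbar := le_trans (norm_nonneg _) (hRle p₀ hp₀)
  have hErrle : ∀ p ∈ X, ‖Ts (T p) - p‖ ≤ Err := fun p hp =>
    hErr ▸ le_csSup hbdd (Set.mem_image_of_mem _ hp)
  have hErr0 : 0 ≤ Err := le_trans (norm_nonneg _) (hErrle p₀ hp₀)
  obtain ⟨c, hcdef⟩ : ∃ c : ℝ,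
      c = opNorm (invSqrt Q * P) * Rbar + opNorm (invSqrt Q * P * B) * vbar := ⟨_, rfl⟩
  rw [← hcdef]
  have hc0 : 0 ≤ c := by
    rw [hcdef]
    exact add_nonneg (mul_nonneg (opNorm_nonneg _) hRbar0) (mul_nonneg (opNorm_nonneg _) hvbar)
  have hcobdd : IsCoboundedUnder (· ≤ ·) atTop (fun t => ‖Ts (zh t) - x t‖) :=
    isCoboundedUnder_le_of_le atTop (fun t => norm_nonneg _)
  -- triangle inequality step, valid always
  have htri : ∀ t ≥ (0:ℝ), ‖Ts (zh t) - x t‖ ≤ L * ‖zh t - T (x t)‖ + Err := by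
    intro t ht
    have hsplit : Ts (zh t) - x t = (Ts (zh t) - Ts (T (x t))) + (Ts (T (x t)) - x t) := by abel
    calc ‖Ts (zh t) - x t‖ ≤ ‖Ts (zh t) - Ts (T (x t))‖ + ‖Ts (T (x t)) - x t‖ := by
          rw [hsplit]; exact norm_add_le _ _
    _ ≤ L * ‖zh t - T (x t)‖ + Err := add_le_add
          (hLip _ (hzZ t ht) _ (hTZ (Set.mem_image_of_mem T (hxX t ht))))
          (hErrle (x t) (hxX t ht))
  rcases Nat.eq_zero_or_pos nz with hnz | hnz
  · -- degenerate case: the observer space is trivial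
    subst hnz
    have hsub : ∀ a b : E 0, a = b := fun a b => PiLp.ext fun i => Fin.elim0 i
    apply limsup_le_of_le hcobdd
    filter_upwards [eventually_ge_atTop (0:ℝ)] with t ht
    have h0 : ‖Ts (zh t) - x t‖ ≤ Err := by
      have := htri t ht
      rw [hsub (zh t - T (x t)) 0, norm_zero, mul_zero, zero_add] at this
      exact this
    refine le_trans h0 (le_add_of_nonneg_left ?_)
    exact mul_nonneg (mul_nonneg hL (Real.sqrt_nonneg _)) hc0
  -- main case
  have hlQ : 0 < lamMin Q := lamMin_pos hnz hQ
  have hlP : 0 < lamMin P := lamMin_pos hnz hP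
  have hlPM : 0 < lamMax P := lamMax_pos hnz hP
  have hPt : Pᵀ = P := transpose_eq_of_herm hP.1
  obtain ⟨S, hSdef⟩ : ∃ S, S = matSqrt Q := ⟨_, rfl⟩
  have hSt : Sᵀ = S := hSdef ▸ transpose_eq_of_herm (matSqrt_herm hQ)
  have hSS : S * S = Q := hSdef ▸ matSqrt_mul_self hQ
  have hPsym : ∀ a b : E nz, (inner ℝ (mv P a) b : ℝ) = inner ℝ a (mv P b) := by
    intro a b; rw [inner_mv, hPt]
  -- the error signal and the Lyapunov function
  obtain ⟨e, het⟩ : ∃ e : ℝ → E nz, ∀ τ, e τ = zh τ - T (x τ) := ⟨_, fun _ => rfl⟩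
  obtain ⟨D, hDt⟩ : ∃ D : ℝ → E nz, ∀ τ, D τ = mv A (e τ) + (mv B (v τ) - R (x τ)) :=
    ⟨_, fun _ => rfl⟩
  obtain ⟨V, hVt⟩ : ∃ V : ℝ → ℝ, ∀ τ, V τ = inner ℝ (mv P (e τ)) (e τ) := ⟨_, fun _ => rfl⟩
  obtain ⟨V', hV't⟩ : ∃ V' : ℝ → ℝ,
      ∀ τ, V' τ = inner ℝ (mv P (e τ)) (D τ) + inner ℝ (mv P (D τ)) (e τ) := ⟨_, fun _ => rfl⟩
  have heD : ∀ t ≥ (0:ℝ), HasDerivAt e (D t) t := by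
    intro t ht
    have hTx : HasDerivAt (fun τ => T (x τ)) (fderiv ℝ T (x t) (f (x t))) t :=
      ((hT.differentiable one_ne_zero) (x t)).hasFDerivAt.comp_hasDerivAt t (hx t ht)
    have hder := (hz t ht).sub hTx
    have hfd : fderiv ℝ T (x t) (f (x t)) = R (x t) + mv A (T (x t)) + mv B (h (x t)) := by
      rw [hR (x t)]; abel
    have heq : mv A (zh t) + mv B (h (x t) + v t) - fderiv ℝ T (x t) (f (x t)) = D t := by
      rw [hDt, het, hfd, mv_sub, mv_add]
      abel
    have := het
    rw [funext het, ← heq]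
    exact hder
  have hVD : ∀ t ≥ (0:ℝ), HasDerivAt V (V' t) t := by
    intro t ht
    have h1 := heD t ht
    have h2 : HasDerivAt (fun τ => mv P (e τ)) (mv P (D t)) t := by
      have := ((mvL P).hasFDerivAt (x := e t)).comp_hasDerivAt t h1
      exact this
    have h3 := h2.inner ℝ h1
    have h4 : V = fun τ => inner ℝ (mv P (e τ)) (e τ) := funext hVt
    rw [h4, hV't t]
    exact h3
  -- the constant K
  obtain ⟨K, hKdef⟩ : ∃ K : ℝ, K = 4 * c^2 * lamMax P / lamMin Q := ⟨_, rfl⟩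
  have hK0 : 0 ≤ K := by
    rw [hKdef]
    have := sq_nonneg c
    positivity
  -- the crucial eventual bound
  have hstep : ∀ K' > K, ∀ᶠ t in atTop, V t ≤ K' := by
    intro K' hK'
    have haK : 4 * c^2 < lamMin Q / lamMax P * K' := by
      rw [div_mul_eq_mul_div, lt_div_iff₀ hlPM]
      calc 4 * c^2 * lamMax P = K * lamMin Q := by rw [hKdef]; field_simp
      _ < K' * lamMin Q := mul_lt_mul_of_pos_right hK' hlQ
      _ = lamMin Q * K' := mul_comm _ _
    obtain ⟨u₀, hu₀def⟩ : ∃ u₀ : ℝ, u₀ = Real.sqrt (lamMin Q / lamMax P * K') := ⟨_, rfl⟩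
    have hu₀sq : u₀^2 = lamMin Q / lamMax P * K' := by
      rw [hu₀def]
      exact Real.sq_sqrt (by linarith [sq_nonneg c])
    have hu₀0 : 0 ≤ u₀ := hu₀def ▸ Real.sqrt_nonneg _
    have hu₀c : 2 * c < u₀ := by
      nlinarith [sq_nonneg (u₀ - 2*c), sq_nonneg (u₀ + 2*c)]
    have hδpos : 0 < u₀^2 - 2 * c * u₀ := by nlinarith
    apply eventually_le_of_deriv hVD K' (u₀^2 - 2 * c * u₀) hδpos
    intro t ht hKV
    obtain ⟨u, hudef⟩ : ∃ u : ℝ, u = ‖mv S (e t)‖ := ⟨_, rfl⟩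
    have hu0 : 0 ≤ u := hudef ▸ norm_nonneg _
    -- V' t = 2 ⟪P e, D⟫
    have hV'eq : V' t = 2 * inner ℝ (mv P (e t)) (D t) := by
      have hcomm : (inner ℝ (mv P (D t)) (e t) : ℝ) = inner ℝ (mv P (e t)) (D t) := by
        rw [hPsym, real_inner_comm]
      rw [hV't t, hcomm]; ring
    -- quadratic term
    have hquad : 2 * (inner ℝ (mv P (e t)) (mv A (e t)) : ℝ) = - inner ℝ (e t) (mv Q (e t)) := by
      have t1 : (inner ℝ (mv P (e t)) (mv A (e t)) : ℝ) = inner ℝ (e t) (mv (P * A) (e t)) := by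
        rw [inner_mv, hPt, ← mv_mv]
      have t2 : (inner ℝ (mv P (e t)) (mv A (e t)) : ℝ) = inner ℝ (e t) (mv (Aᵀ * P) (e t)) := by
        rw [real_inner_comm, inner_mv, ← mv_mv]
      calc 2 * (inner ℝ (mv P (e t)) (mv A (e t)) : ℝ)
          = inner ℝ (e t) (mv (P * A) (e t)) + inner ℝ (e t) (mv (Aᵀ * P) (e t)) := by
            rw [← t1, ← t2]; ring
      _ = inner ℝ (e t) (mv (P * A + Aᵀ * P) (e t)) := by rw [mv_addM, inner_add_right]
      _ = - inner ℝ (e t) (mv Q (e t)) := by rw [hLyap, mv_negM, inner_neg_right]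
    have hu2 : (inner ℝ (e t) (mv Q (e t)) : ℝ) = u^2 := by
      have hQs : mv Q (e t) = mv S (mv S (e t)) := by rw [← mv_mv, hSS]
      rw [hQs, real_inner_comm, inner_mv, hSt, real_inner_self_eq_norm_sq, hudef]
    -- cross term
    have hcross : (inner ℝ (mv P (e t)) (mv B (v t) - R (x t)) : ℝ) ≤ u * c := by
      have hfac : P = S * (invSqrt Q * P) := by
        rw [hSdef, ← Matrix.mul_assoc, matSqrt_mul_invSqrt hQ, Matrix.one_mul]
      have hw : ‖mv (invSqrt Q * P) (mv B (v t) - R (x t))‖ ≤ c := by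
        calc ‖mv (invSqrt Q * P) (mv B (v t) - R (x t))‖
            = ‖mv (invSqrt Q * P * B) (v t) - mv (invSqrt Q * P) (R (x t))‖ := by
              rw [mv_sub, ← mv_mv]
        _ ≤ ‖mv (invSqrt Q * P * B) (v t)‖ + ‖mv (invSqrt Q * P) (R (x t))‖ := norm_sub_le _ _
        _ ≤ opNorm (invSqrt Q * P * B) * vbar + opNorm (invSqrt Q * P) * Rbar := by
              refine add_le_add (le_trans (norm_mv_le _ _) ?_) (le_trans (norm_mv_le _ _) ?_)
              · exact mul_le_mul_of_nonneg_left (hv t ht) (opNorm_nonneg _)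
              · exact mul_le_mul_of_nonneg_left (hRle (x t) (hxX t ht)) (opNorm_nonneg _)
        _ = c := by rw [hcdef]; ring
      calc (inner ℝ (mv P (e t)) (mv B (v t) - R (x t)) : ℝ)
          = inner ℝ (e t) (mv P (mv B (v t) - R (x t))) := hPsym _ _
      _ = inner ℝ (e t) (mv S (mv (invSqrt Q * P) (mv B (v t) - R (x t)))) := by
            rw [← mv_mv, ← hfac]
      _ = inner ℝ (mv S (e t)) (mv (invSqrt Q * P) (mv B (v t) - R (x t))) := by
            rw [real_inner_comm, inner_mv, hSt, real_inner_comm]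
      _ ≤ ‖mv S (e t)‖ * ‖mv (invSqrt Q * P) (mv B (v t) - R (x t))‖ := real_inner_le_norm _ _
      _ ≤ u * c := by rw [hudef]; exact mul_le_mul_of_nonneg_left hw (norm_nonneg _)
    -- the differential inequality
    have hDsplit : (inner ℝ (mv P (e t)) (D t) : ℝ)
        = inner ℝ (mv P (e t)) (mv A (e t)) + inner ℝ (mv P (e t)) (mv B (v t) - R (x t)) := by
      rw [hDt t, inner_add_right]
    have hV'le : V' t ≤ -u^2 + 2 * (u * c) := by
      rw [hV'eq, hDsplit]
      have : 2 * ((inner ℝ (mv P (e t)) (mv A (e t)) : ℝ)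
          + inner ℝ (mv P (e t)) (mv B (v t) - R (x t)))
          = -u^2 + 2 * (inner ℝ (mv P (e t)) (mv B (v t) - R (x t)) : ℝ) := by
        rw [mul_add, hquad, hu2]
      rw [this]
      linarith [hcross]
    -- Rayleigh bounds
    have hVe : V t ≤ lamMax P * ‖e t‖^2 := hVt t ▸ rayleigh_le P hP.1 (e t)
    have hue : lamMin Q * ‖e t‖^2 ≤ u^2 := by
      have := rayleigh_ge Q hQ.1 (e t)
      rw [real_inner_comm] at this
      rw [← hu2]
      exact this
    have huu₀ : u₀ ≤ u := by
      have hu2K : u₀^2 ≤ u^2 := by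
        rw [hu₀sq, div_mul_eq_mul_div, div_le_iff₀ hlPM]
        have h1 : lamMin Q * K' ≤ lamMin Q * V t := mul_le_mul_of_nonneg_left hKV hlQ.le
        have h2 : lamMin Q * V t ≤ lamMin Q * (lamMax P * ‖e t‖^2) :=
          mul_le_mul_of_nonneg_left hVe hlQ.le
        nlinarith [mul_le_mul_of_nonneg_left hue hlPM.le]
      nlinarith
    nlinarith [mul_nonneg (sub_nonneg.2 huu₀) (by linarith : (0:ℝ) ≤ u + u₀ - 2 * c)]
  -- extract the limsup bound for every K' > K
  have hbound : ∀ K' > K, limsup (fun t => ‖Ts (zh t) - x t‖) atTop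
      ≤ L * Real.sqrt (K' / lamMin P) + Err := by
    intro K' hK'
    apply limsup_le_of_le hcobdd
    filter_upwards [hstep K' hK', eventually_ge_atTop (0:ℝ)] with t hVK ht
    have hVray : lamMin P * ‖e t‖^2 ≤ V t := hVt t ▸ rayleigh_ge P hP.1 (e t)
    have hesq : ‖e t‖^2 ≤ K' / lamMin P := by
      rw [le_div_iff₀ hlP]; nlinarith [hVK, hVray]
    have hebound : ‖e t‖ ≤ Real.sqrt (K' / lamMin P) := by
      calc ‖e t‖ = Real.sqrt (‖e t‖^2) := (Real.sqrt_sq (norm_nonneg _)).symm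
      _ ≤ _ := Real.sqrt_le_sqrt hesq
    calc ‖Ts (zh t) - x t‖ ≤ L * ‖zh t - T (x t)‖ + Err := htri t ht
    _ ≤ L * Real.sqrt (K' / lamMin P) + Err := by
        have h1 : ‖zh t - T (x t)‖ ≤ Real.sqrt (K' / lamMin P) := het t ▸ hebound
        nlinarith
  -- identify the target constant
  have htarget : L * Real.sqrt (4 * lamMax P / (lamMin Q * lamMin P)) * c
      = L * Real.sqrt (K / lamMin P) := by
    have hKeq : K / lamMin P = (4 * lamMax P / (lamMin Q * lamMin P)) * c^2 := by
      rw [hKdef]; field_simp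
    rw [hKeq, Real.sqrt_mul (by positivity) (c^2), Real.sqrt_sq hc0]
    ring
  rw [show L * Real.sqrt (4 * lamMax P / (lamMin Q * lamMin P)) * c + Err
      = L * Real.sqrt (K / lamMin P) + Err by rw [htarget]]
  -- epsilon argument
  refine le_of_forall_pos_le_add fun ε hε => ?_
  have hφ : ContinuousAt (fun s : ℝ => L * Real.sqrt (s / lamMin P)) K := by
    apply ContinuousAt.mul continuousAt_const
    exact Real.continuous_sqrt.continuousAt.comp (continuous_id.div_const _).continuousAt
  obtain ⟨d, hd, hball⟩ := Metric.continuousAt_iff.1 hφ ε hε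
  have hdist : dist (K + d/2) K < d := by
    rw [Real.dist_eq]
    rw [show K + d/2 - K = d/2 by ring, abs_of_pos (by linarith)]
    linarith
  have hcont := hball hdist
  rw [Real.dist_eq, abs_lt] at hcont
  have := hbound (K + d/2) (by linarith)
  calc limsup (fun t => ‖Ts (zh t) - x t‖) atTop
      ≤ L * Real.sqrt ((K + d/2) / lamMin P) + Err := this
  _ ≤ L * Real.sqrt (K / lamMin P) + Err + ε := by
      have : L * Real.sqrt ((K + d/2) / lamMin P) - L * Real.sqrt (K / lamMin P) < ε :=
        hcont.2
      linarith
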